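/- There exists a positive constant C (depending only on λ) such that for all squares Q ∈ D_m and R ∈ D_n with m < n and R ⊂ Q, one has |S_R − S_Q − S_{Q,R}| ≤ C a_m. -/

import Mathlib

open MeasureTheory Filter Set Topology
open scoped ENNReal

noncomputable section

/-- Side length of generation-`n` squares: `s n = λ₁ ⋯ λₙ` (here `Λ k` is `λ_{k+1}`). -/
def sideLen (Λ : ℕ → ℝ) (n : ℕ) : ℝ := ∏ k ∈ Finset.range n, Λ k

/-- Lower-left corner of the generation-`n` square encoded by the word `w`. -/
def cornerPt (Λ : ℕ → ℝ) (w : ℕ → Bool × Bool) (n : ℕ) : ℂ :=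
  ∑ k ∈ Finset.range n,
    (((if (w k).1 then sideLen Λ k - sideLen Λ (k + 1) else 0 : ℝ) : ℂ) +
      ((if (w k).2 then sideLen Λ k - sideLen Λ (k + 1) else 0 : ℝ) : ℂ) * Complex.I)

/-- The (closed) generation-`n` square encoded by the word `w`. -/
def cSquare (Λ : ℕ → ℝ) (w : ℕ → Bool × Bool) (n : ℕ) : Set ℂ :=
  {z : ℂ | (cornerPt Λ w n).re ≤ z.re ∧ z.re ≤ (cornerPt Λ w n).re + sideLen Λ n ∧
    (cornerPt Λ w n).im ≤ z.im ∧ z.im ≤ (cornerPt Λ w n).im + sideLen Λ n}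

/-- The family `𝒟_n` of generation-`n` squares. -/
def genSq (Λ : ℕ → ℝ) (n : ℕ) : Set (Set ℂ) := {Q | ∃ w, Q = cSquare Λ w n}

/-- The planar Cantor set `K = ⋂ₙ ⋃ⱼ Qⱼⁿ`. -/
def cantorK (Λ : ℕ → ℝ) : Set ℂ := ⋂ n, ⋃ w : ℕ → Bool × Bool, cSquare Λ w n

/-- The linear density `a_n = 4^{-n}/s_n` at generation `n`. -/
def linDensity (Λ : ℕ → ℝ) (n : ℕ) : ℝ := 1 / (4 ^ n * sideLen Λ n)

/-- `S_Q`: the martingale value at a square `Q`,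
`S_Q = μ(Q)⁻¹ ∫_Q ∫_{K ∖ Q} (z-y)⁻¹ dμ(y) dμ(z)`. -/
def SQ (Λ : ℕ → ℝ) (μ : Measure ℂ) (Q : Set ℂ) : ℂ :=
  ⨍ z in Q, ∫ y in cantorK Λ \ Q, (z - y)⁻¹ ∂μ ∂μ

/-- `S_{Q,R}`: the relative martingale started at `Q`, evaluated at `R ⊆ Q`,
`S_{Q,R} = μ(R)⁻¹ ∫_R ∫_{Q ∖ R} (z-y)⁻¹ dμ(y) dμ(z)`. -/
def Srel (μ : Measure ℂ) (Q R : Set ℂ) : ℂ :=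
  ⨍ z in R, ∫ y in Q \ R, (z - y)⁻¹ ∂μ ∂μ

def corner1 (Λ : ℕ → ℝ) (a : ℕ → Bool) (n : ℕ) : ℝ :=
  ∑ k ∈ Finset.range n, if a k then sideLen Λ k - sideLen Λ (k + 1) else 0

lemma cornerPt_re (Λ : ℕ → ℝ) (w : ℕ → Bool × Bool) (n : ℕ) :
    (cornerPt Λ w n).re = corner1 Λ (fun k => (w k).1) n := by
  simp [cornerPt, corner1, Complex.re_sum]

lemma cornerPt_im (Λ : ℕ → ℝ) (w : ℕ → Bool × Bool) (n : ℕ) :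
    (cornerPt Λ w n).im = corner1 Λ (fun k => (w k).2) n := by
  simp [cornerPt, corner1, Complex.im_sum]


variable {Λ : ℕ → ℝ} {lam : ℝ}

lemma sideLen_pos (hΛ : ∀ n, 1 / 4 ≤ Λ n ∧ Λ n ≤ lam) (n : ℕ) : 0 < sideLen Λ n :=
  Finset.prod_pos fun k _ => lt_of_lt_of_le (by norm_num) (hΛ k).1

lemma sideLen_succ (Λ : ℕ → ℝ) (n : ℕ) : sideLen Λ (n + 1) = sideLen Λ n * Λ n :=
  Finset.prod_range_succ _ _

lemma sideLen_succ_le (hΛ : ∀ n, 1 / 4 ≤ Λ n ∧ Λ n ≤ lam) (n : ℕ) :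
    sideLen Λ (n + 1) ≤ lam * sideLen Λ n := by
  rw [sideLen_succ, mul_comm]
  exact mul_le_mul_of_nonneg_right (hΛ n).2 (sideLen_pos hΛ n).le

lemma sideLen_le_pow (hΛ : ∀ n, 1 / 4 ≤ Λ n ∧ Λ n ≤ lam) {k m : ℕ} (h : k ≤ m) :
    sideLen Λ m ≤ lam ^ (m - k) * sideLen Λ k := by
  have hlam0 : (0:ℝ) ≤ lam := le_trans (by norm_num) (le_trans (hΛ 0).1 (hΛ 0).2)
  induction m, h using Nat.le_induction with
  | base => simp
  | succ n hn ih =>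
      have : sideLen Λ (n + 1) ≤ lam * sideLen Λ n := sideLen_succ_le hΛ n
      calc sideLen Λ (n + 1) ≤ lam * sideLen Λ n := this
        _ ≤ lam * (lam ^ (n - k) * sideLen Λ k) := by
            exact mul_le_mul_of_nonneg_left ih hlam0
        _ = lam ^ (n + 1 - k) * sideLen Λ k := by
            rw [Nat.succ_sub hn, pow_succ]; ring

lemma sideLen_anti (hΛ : ∀ n, 1 / 4 ≤ Λ n ∧ Λ n ≤ lam) (hlam : lam < 1 / 2) {k m : ℕ}
    (h : k ≤ m) : sideLen Λ m ≤ sideLen Λ k := by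
  have hlam0 : (0:ℝ) ≤ lam := le_trans (by norm_num) (le_trans (hΛ 0).1 (hΛ 0).2)
  calc sideLen Λ m ≤ lam ^ (m - k) * sideLen Λ k := sideLen_le_pow hΛ h
    _ ≤ 1 * sideLen Λ k := by
        apply mul_le_mul_of_nonneg_right _ (sideLen_pos hΛ k).le
        exact pow_le_one₀ hlam0 (by linarith)
    _ = sideLen Λ k := one_mul _


lemma corner1_succ (Λ : ℕ → ℝ) (a : ℕ → Bool) (n : ℕ) :
    corner1 Λ a (n + 1) = corner1 Λ a n + (if a n then sideLen Λ n - sideLen Λ (n + 1) else 0) :=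
  Finset.sum_range_succ _ _

lemma corner1_nested (hΛ : ∀ n, 1 / 4 ≤ Λ n ∧ Λ n ≤ lam) (hlam : lam < 1 / 2)
    (a : ℕ → Bool) {k n : ℕ} (h : k ≤ n) :
    corner1 Λ a k ≤ corner1 Λ a n ∧
      corner1 Λ a n + sideLen Λ n ≤ corner1 Λ a k + sideLen Λ k := by
  induction n, h using Nat.le_induction with
  | base => exact ⟨le_refl _, le_refl _⟩
  | succ n hn ih =>
      have hs : sideLen Λ (n + 1) ≤ sideLen Λ n := sideLen_anti hΛ hlam (Nat.le_succ n)
      rw [corner1_succ]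
      rcases ih with ⟨ih1, ih2⟩
      cases hb : a n <;> simp only [hb, Bool.false_eq_true, if_false, if_true] <;> constructor <;> linarith

lemma corner1_sep (hΛ : ∀ n, 1 / 4 ≤ Λ n ∧ Λ n ≤ lam) (hlam : lam < 1 / 2)
    {a b : ℕ → Bool} {j n : ℕ} (hj : j < n) (hab : a j ≠ b j)
    (hagree : ∀ i < j, a i = b i)
    {x y : ℝ} (hx : corner1 Λ a n ≤ x ∧ x ≤ corner1 Λ a n + sideLen Λ n)
    (hy : corner1 Λ b n ≤ y ∧ y ≤ corner1 Λ b n + sideLen Λ n) :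
    sideLen Λ j - 2 * sideLen Λ (j + 1) ≤ |x - y| := by
  have hcj : corner1 Λ a j = corner1 Λ b j := by
    unfold corner1
    exact Finset.sum_congr rfl fun i hi => by
      rw [hagree i (Finset.mem_range.mp hi)]
  have hjn : j + 1 ≤ n := hj
  have hA := corner1_nested hΛ hlam a hjn
  have hB := corner1_nested hΛ hlam b hjn
  rw [corner1_succ] at hA hB
  cases ha : a j <;> cases hb : b j <;> rw [ha] at hA hab <;> rw [hb] at hB hab
  · exact absurd rfl hab
  · simp only [Bool.false_eq_true, if_false] at hA
    simp only [if_true] at hB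
    rw [abs_sub_comm, le_abs]
    left
    linarith [hx.2, hA.2, hy.1, hB.1, hcj]
  · simp only [if_true] at hA
    simp only [Bool.false_eq_true, if_false] at hB
    rw [le_abs]
    left
    linarith [hy.2, hB.2, hx.1, hA.1, hcj]
  · exact absurd rfl hab







lemma cSquare_antitone (hΛ : ∀ n, 1 / 4 ≤ Λ n ∧ Λ n ≤ lam) (hlam : lam < 1 / 2)
    (w : ℕ → Bool × Bool) {k n : ℕ} (h : k ≤ n) : cSquare Λ w n ⊆ cSquare Λ w k := by
  intro z hz
  obtain ⟨h1, h2, h3, h4⟩ := hz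
  rw [cornerPt_re] at h1 h2
  rw [cornerPt_im] at h3 h4
  have hre := corner1_nested hΛ hlam (fun k => (w k).1) h
  have him := corner1_nested hΛ hlam (fun k => (w k).2) h
  refine ⟨?_, ?_, ?_, ?_⟩
  · rw [cornerPt_re]; linarith [hre.1]
  · rw [cornerPt_re]; linarith [hre.2]
  · rw [cornerPt_im]; linarith [him.1]
  · rw [cornerPt_im]; linarith [him.2]

lemma cSquare_congr {w w' : ℕ → Bool × Bool} {n : ℕ} (h : ∀ i < n, w i = w' i) :
    cSquare Λ w n = cSquare Λ w' n := by
  have : cornerPt Λ w n = cornerPt Λ w' n := by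
    unfold cornerPt
    exact Finset.sum_congr rfl fun i hi => by rw [h i (Finset.mem_range.mp hi)]
  unfold cSquare
  rw [this]

lemma cantorK_mem_level {y : ℂ} (hy : y ∈ cantorK Λ) (n : ℕ) :
    ∃ w, y ∈ cSquare Λ w n := by
  have := Set.mem_iInter.mp hy n
  exact Set.mem_iUnion.mp this

/-- Key separation estimate at level `n+1`. -/
lemma sep_estimate (hΛ : ∀ n, 1 / 4 ≤ Λ n ∧ Λ n ≤ lam) (hlam : lam < 1 / 2)
    {w : ℕ → Bool × Bool} {n : ℕ} {z y : ℂ} (hz : z ∈ cSquare Λ w (n + 1))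
    (hy : y ∈ cantorK Λ) (hyn : y ∉ cSquare Λ w (n + 1)) :
    (1 - 2 * lam) * sideLen Λ n ≤ ‖z - y‖ := by
  classical
  obtain ⟨w', hw'⟩ := cantorK_mem_level hy (n + 1)
  have hex : ∃ j, w j ≠ w' j := by
    by_contra h
    push_neg at h
    exact hyn (cSquare_congr (fun i _ => (h i).symm) ▸ hw')
  set j := Nat.find hex with hjdef
  have hjne : w j ≠ w' j := Nat.find_spec hex
  have hagree : ∀ i < j, w i = w' i := fun i hi => by
    by_contra hne
    exact Nat.find_min hex hi hne
  have hjlt : j < n + 1 := by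
    by_contra hge
    push_neg at hge
    exact hyn (cSquare_congr (fun i hi => hagree i (lt_of_lt_of_le hi hge)) ▸ hw')
  -- distance at the first disagreement index
  have hgap : sideLen Λ j - 2 * sideLen Λ (j + 1) ≤ ‖z - y‖ := by
    have hcoord : (w j).1 ≠ (w' j).1 ∨ (w j).2 ≠ (w' j).2 := by
      by_contra h
      push_neg at h
      exact hjne (Prod.ext h.1 h.2)
    obtain ⟨hz1, hz2, hz3, hz4⟩ := hz
    obtain ⟨hy1, hy2, hy3, hy4⟩ := hw'
    rw [cornerPt_re] at hz1 hz2 hy1 hy2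
    rw [cornerPt_im] at hz3 hz4 hy3 hy4
    rcases hcoord with hc | hc
    · have := corner1_sep (a := fun k => (w k).1) (b := fun k => (w' k).1) hΛ hlam hjlt hc
        (fun i hi => congrArg Prod.fst (hagree i hi)) ⟨hz1, hz2⟩ ⟨hy1, hy2⟩
      calc sideLen Λ j - 2 * sideLen Λ (j+1) ≤ |z.re - y.re| := this
        _ = |(z - y).re| := by rw [Complex.sub_re]
        _ ≤ ‖z - y‖ := by exact Complex.abs_re_le_norm _
    · have := corner1_sep (a := fun k => (w k).2) (b := fun k => (w' k).2) hΛ hlam hjlt hc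
        (fun i hi => congrArg Prod.snd (hagree i hi)) ⟨hz3, hz4⟩ ⟨hy3, hy4⟩
      calc sideLen Λ j - 2 * sideLen Λ (j+1) ≤ |z.im - y.im| := this
        _ = |(z - y).im| := by rw [Complex.sub_im]
        _ ≤ ‖z - y‖ := by exact Complex.abs_im_le_norm _
  have hj_le_n : j ≤ n := Nat.lt_succ_iff.mp hjlt
  have h1 : (1 - 2 * lam) * sideLen Λ n ≤ (1 - 2 * lam) * sideLen Λ j := by
    apply mul_le_mul_of_nonneg_left (sideLen_anti hΛ hlam hj_le_n) (by linarith)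
  have h2 : (1 - 2 * lam) * sideLen Λ j ≤ sideLen Λ j - 2 * sideLen Λ (j + 1) := by
    have := sideLen_succ_le hΛ j
    nlinarith [sideLen_pos hΛ j]
  linarith

/-- Weaker separation: any point of `K` outside a level-`n` square is at distance
at least `(1-2λ) sₙ` from the square. -/
lemma sep_estimate' (hΛ : ∀ n, 1 / 4 ≤ Λ n ∧ Λ n ≤ lam) (hlam : lam < 1 / 2)
    {w : ℕ → Bool × Bool} {n : ℕ} {z y : ℂ} (hz : z ∈ cSquare Λ w n)
    (hy : y ∈ cantorK Λ) (hyn : y ∉ cSquare Λ w n) :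
    (1 - 2 * lam) * sideLen Λ n ≤ ‖z - y‖ := by
  cases n with
  | zero =>
      exfalso
      obtain ⟨w', hw'⟩ := cantorK_mem_level hy 0
      exact hyn (cSquare_congr (w := w') (fun i hi => absurd hi (Nat.not_lt_zero i)) ▸ hw')
  | succ k =>
      calc (1 - 2*lam) * sideLen Λ (k+1) ≤ (1 - 2*lam) * sideLen Λ k :=
            mul_le_mul_of_nonneg_left (sideLen_anti hΛ hlam (Nat.le_succ k)) (by linarith)
        _ ≤ ‖z - y‖ := sep_estimate hΛ hlam hz hy hyn

lemma diam_bound (hΛ : ∀ n, 1 / 4 ≤ Λ n ∧ Λ n ≤ lam) {w : ℕ → Bool × Bool} {n : ℕ}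
    {z z' : ℂ} (hz : z ∈ cSquare Λ w n) (hz' : z' ∈ cSquare Λ w n) :
    ‖z - z'‖ ≤ 2 * sideLen Λ n := by
  obtain ⟨h1, h2, h3, h4⟩ := hz
  obtain ⟨h1', h2', h3', h4'⟩ := hz'
  calc ‖z - z'‖ ≤ |(z - z').re| + |(z - z').im| := by
        exact Complex.norm_le_abs_re_add_abs_im _
    _ ≤ sideLen Λ n + sideLen Λ n := by
        apply add_le_add <;> rw [abs_le] <;> simp [Complex.sub_re, Complex.sub_im] <;>
          constructor <;> linarith
    _ = 2 * sideLen Λ n := by ring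

lemma measurableSet_cSquare (Λ : ℕ → ℝ) (w : ℕ → Bool × Bool) (n : ℕ) :
    MeasurableSet (cSquare Λ w n) := by
  have : cSquare Λ w n =
      {z : ℂ | (cornerPt Λ w n).re ≤ z.re} ∩ {z : ℂ | z.re ≤ (cornerPt Λ w n).re + sideLen Λ n} ∩
      ({z : ℂ | (cornerPt Λ w n).im ≤ z.im} ∩
        {z : ℂ | z.im ≤ (cornerPt Λ w n).im + sideLen Λ n}) := by
    ext z; simp [cSquare]; tauto
  rw [this]
  exact (((measurableSet_le measurable_const Complex.measurable_re).inter
    (measurableSet_le Complex.measurable_re measurable_const)).inter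
    ((measurableSet_le measurable_const Complex.measurable_im).inter
    (measurableSet_le Complex.measurable_im measurable_const)))

lemma iUnion_cSquare_eq (Λ : ℕ → ℝ) (n : ℕ) :
    (⋃ w : ℕ → Bool × Bool, cSquare Λ w n) =
      ⋃ v : Fin n → Bool × Bool, cSquare Λ (fun k => if h : k < n then v ⟨k, h⟩ else (false, false)) n := by
  apply Set.Subset.antisymm
  · intro z hz
    obtain ⟨w, hw⟩ := Set.mem_iUnion.mp hz
    apply Set.mem_iUnion.mpr
    refine ⟨fun i => w i.1, ?_⟩
    have : cSquare Λ w n =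
        cSquare Λ (fun k => if h : k < n then (fun i : Fin n => w i.1) ⟨k, h⟩ else (false, false)) n :=
      cSquare_congr (fun i hi => by simp [hi])
    exact this ▸ hw
  · intro z hz
    obtain ⟨v, hv⟩ := Set.mem_iUnion.mp hz
    exact Set.mem_iUnion.mpr ⟨_, hv⟩

lemma measurableSet_cantorK (Λ : ℕ → ℝ) : MeasurableSet (cantorK Λ) := by
  unfold cantorK
  refine MeasurableSet.iInter fun n => ?_
  rw [iUnion_cSquare_eq]
  exact MeasurableSet.iUnion fun v => measurableSet_cSquare _ _ _

/-- annuli decomposition of `K ∖ Q`. -/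
lemma annuli_decomp (hΛ : ∀ n, 1 / 4 ≤ Λ n ∧ Λ n ≤ lam) (hlam : lam < 1 / 2)
    (w : ℕ → Bool × Bool) (m : ℕ) :
    cantorK Λ \ cSquare Λ w m =
      ⋃ k ∈ Finset.range m, cantorK Λ ∩ (cSquare Λ w k \ cSquare Λ w (k + 1)) := by
  classical
  apply Set.Subset.antisymm
  · rintro y ⟨hyK, hyQ⟩
    have hex : ∃ k, y ∉ cSquare Λ w (k + 1) := by
      cases m with
      | zero =>
          exfalso
          obtain ⟨w', hw'⟩ := cantorK_mem_level hyK 0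
          exact hyQ (cSquare_congr (w := w') (fun i hi => absurd hi (Nat.not_lt_zero i)) ▸ hw')
      | succ m' => exact ⟨m', hyQ⟩
    set k := Nat.find hex with hkdef
    have hk : y ∉ cSquare Λ w (k + 1) := Nat.find_spec hex
    have hk0 : y ∈ cSquare Λ w k := by
      cases hkk : k with
      | zero =>
          obtain ⟨w', hw'⟩ := cantorK_mem_level hyK 0
          exact (cSquare_congr (w := w') (fun i hi => absurd hi (Nat.not_lt_zero i)) ▸ hw')
      | succ k' =>
          have := Nat.find_min hex (m := k') (by omega)
          rw [not_not] at this
          exact this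
    have hkm : k < m := by
      rcases Nat.lt_or_ge k m with h | h
      · exact h
      · exact absurd (cSquare_antitone hΛ hlam w (by omega : m ≤ k) hk0) hyQ
    exact Set.mem_biUnion (Finset.mem_range.mpr hkm) ⟨hyK, hk0, hk⟩
  · intro y hy
    simp only [Set.mem_iUnion] at hy
    obtain ⟨k, hk, hyK, _, hk1⟩ := hy
    refine ⟨hyK, fun hyQ => hk1 ?_⟩
    exact cSquare_antitone hΛ hlam w (Finset.mem_range.mp hk) hyQ

lemma geom_bound {r : ℝ} (h0 : 0 ≤ r) (h1 : r < 1) (n : ℕ) :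
    ∑ i ∈ Finset.range n, r ^ i ≤ (1 - r)⁻¹ := by
  have key : (∑ i ∈ Finset.range n, r ^ i) * (1 - r) ≤ 1 := by
    have := geom_sum_mul r n
    have h' : (∑ i ∈ Finset.range n, r ^ i) * (1 - r) = 1 - r ^ n := by linarith [this]
    have : 0 ≤ r ^ n := pow_nonneg h0 n
    linarith
  rw [← le_div_iff₀ (by linarith : (0:ℝ) < 1 - r)] at key
  simpa [one_div] using key

lemma geom_bound' {r : ℝ} (h0 : 0 ≤ r) (h1 : r < 1) (m : ℕ) :
    ∑ k ∈ Finset.range m, r ^ (m - k) ≤ (1 - r)⁻¹ := by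
  have e : ∑ k ∈ Finset.range m, r ^ (m - k)
      = (∑ k ∈ Finset.range m, r ^ (m - 1 - k)) * r := by
    rw [Finset.sum_mul]
    refine Finset.sum_congr rfl fun k hk => ?_
    have : m - k = (m - 1 - k) + 1 := by
      have := Finset.mem_range.mp hk; omega
    rw [this, pow_succ]
  rw [e, Finset.sum_range_reflect (fun j => r ^ j) m]
  have h2 := geom_bound h0 h1 m
  have h3 : (0:ℝ) ≤ (1 - r)⁻¹ := inv_nonneg.mpr (by linarith)
  calc (∑ j ∈ Finset.range m, r ^ j) * r ≤ (1 - r)⁻¹ * 1 :=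
        mul_le_mul h2 (by linarith) h0 h3
    _ = (1 - r)⁻¹ := mul_one _

section Analytic

variable {Λ : ℕ → ℝ} {lam : ℝ} {μ : Measure ℂ}

lemma integrableOn_of_bound [IsFiniteMeasure μ] {s : Set ℂ} {f : ℂ → ℂ} {C : ℝ}
    (hs : MeasurableSet s) (hf : Measurable f) (hb : ∀ y ∈ s, ‖f y‖ ≤ C) :
    IntegrableOn f s μ := by
  refine Integrable.mono' (integrable_const C) hf.aestronglyMeasurable ?_
  exact (ae_restrict_iff' hs).mpr (ae_of_all _ hb)

lemma inv_norm_bound {z y : ℂ} {d : ℝ} (hd : 0 < d) (h : d ≤ ‖z - y‖) :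
    ‖(z - y)⁻¹‖ ≤ d⁻¹ := by
  rw [norm_inv]
  exact inv_anti₀ hd h

/-- Core oscillation estimate: the linear potential of `K ∖ Q` varies by at most
`C₀ a_m` over the square `Q` of generation `m`. -/
lemma core_osc (hΛ : ∀ n, 1 / 4 ≤ Λ n ∧ Λ n ≤ lam) (hlam : lam < 1 / 2)
    [IsProbabilityMeasure μ]
    (hμQ : ∀ (w : ℕ → Bool × Bool) (n : ℕ), μ (cSquare Λ w n) = (4 : ℝ≥0∞)⁻¹ ^ n)
    {w : ℕ → Bool × Bool} {m : ℕ} {z z' : ℂ}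
    (hz : z ∈ cSquare Λ w m) (hz' : z' ∈ cSquare Λ w m) :
    ‖(∫ y in cantorK Λ \ cSquare Λ w m, (z - y)⁻¹ ∂μ) -
        ∫ y in cantorK Λ \ cSquare Λ w m, (z' - y)⁻¹ ∂μ‖ ≤
      2 * (1 - 2*lam)⁻¹ * (1 - 2*lam)⁻¹ * (1 - 4*lam^2)⁻¹ * linDensity Λ m := by
  have hlam4 : (1:ℝ)/4 ≤ lam := le_trans (hΛ 0).1 (hΛ 0).2
  have hδ : (0:ℝ) < 1 - 2*lam := by linarith
  have hδi : (0:ℝ) < (1 - 2*lam)⁻¹ := inv_pos.mpr hδ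
  have h4 : (0:ℝ) < 4 := by norm_num
  have hq0 : (0:ℝ) ≤ 4*lam^2 := by positivity
  have hq1 : 4*lam^2 < 1 := by nlinarith
  set K := cantorK Λ
  set Q := cSquare Λ w m with hQdef
  have hKm : MeasurableSet K := measurableSet_cantorK Λ
  have hQm : MeasurableSet (K \ Q) := hKm.diff (measurableSet_cSquare Λ w m)
  have hsm := sideLen_pos hΛ
  -- integrability of each potential on K \ Q
  have hint : ∀ v ∈ cSquare Λ w m, IntegrableOn (fun y => (v - y)⁻¹) (K \ Q) μ := by
    intro v hv
    refine integrableOn_of_bound (C := ((1 - 2*lam) * sideLen Λ m)⁻¹) hQm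
      (measurable_const.sub measurable_id).inv ?_
    rintro y ⟨hyK, hyQ⟩
    exact inv_norm_bound (mul_pos hδ (hsm m)) (sep_estimate' hΛ hlam hv hyK hyQ)
  rw [← integral_sub (hint z hz) (hint z' hz')]
  -- decompose into annuli
  have hdecomp := annuli_decomp hΛ hlam w m
  set B : ℕ → Set ℂ := fun k => K ∩ (cSquare Λ w k \ cSquare Λ w (k + 1)) with hBdef
  have hBmeas : ∀ k, MeasurableSet (B k) :=
    fun k => hKm.inter ((measurableSet_cSquare Λ w k).diff (measurableSet_cSquare Λ w (k+1)))
  have hBsub : ∀ k ∈ Finset.range m, B k ⊆ K \ Q := by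
    intro k hk y hy
    have hkm := Finset.mem_range.mp hk
    exact ⟨hy.1, fun hyQ => hy.2.2 (cSquare_antitone hΛ hlam w hkm hyQ)⟩
  have hdisj : (↑(Finset.range m) : Set ℕ).Pairwise (Function.onFun Disjoint B) := by
    have key : ∀ i j : ℕ, i < j → Disjoint (B i) (B j) := by
      intro i j hlt
      refine Set.disjoint_left.mpr ?_
      rintro y ⟨_, _, hyi1⟩ ⟨_, hyj, _⟩
      exact hyi1 (cSquare_antitone hΛ hlam w hlt hyj)
    intro i _ j _ hij
    rcases Nat.lt_or_ge i j with hlt | hge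
    · exact key i j hlt
    · exact (key j i (by omega)).symm
  have hintB : ∀ k ∈ Finset.range m,
      IntegrableOn (fun y => (z - y)⁻¹ - (z' - y)⁻¹) (B k) μ :=
    fun k hk => MeasureTheory.IntegrableOn.mono_set
      (Integrable.sub (hint z hz) (hint z' hz')) (hBsub k hk)
  rw [show K \ Q = ⋃ k ∈ Finset.range m, B k from hdecomp]
  rw [integral_biUnion_finset (Finset.range m) (fun k _ => hBmeas k) hdisj hintB]
  -- bound each annulus term
  have hterm : ∀ k ∈ Finset.range m,
      ‖∫ y in B k, ((z - y)⁻¹ - (z' - y)⁻¹) ∂μ‖ ≤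
        (2 * sideLen Λ m * (((1-2*lam) * sideLen Λ k)⁻¹ * ((1-2*lam) * sideLen Λ k)⁻¹))
          * ((4:ℝ)⁻¹) ^ k := by
    intro k hk
    have hkm := Finset.mem_range.mp hk
    have hdk : (0:ℝ) < (1-2*lam) * sideLen Λ k := mul_pos hδ (hsm k)
    have hzk : z ∈ cSquare Λ w (k+1) := cSquare_antitone hΛ hlam w hkm hz
    have hzk' : z' ∈ cSquare Λ w (k+1) := cSquare_antitone hΛ hlam w hkm hz'
    have hbd : ∀ y ∈ B k, ‖(z - y)⁻¹ - (z' - y)⁻¹‖ ≤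
        2 * sideLen Λ m * (((1-2*lam) * sideLen Λ k)⁻¹ * ((1-2*lam) * sideLen Λ k)⁻¹) := by
      rintro y ⟨hyK, _, hyk1⟩
      have hd1 : (1-2*lam) * sideLen Λ k ≤ ‖z - y‖ := sep_estimate hΛ hlam hzk hyK hyk1
      have hd2 : (1-2*lam) * sideLen Λ k ≤ ‖z' - y‖ := sep_estimate hΛ hlam hzk' hyK hyk1
      have hzy : z - y ≠ 0 := by
        intro h; rw [h] at hd1; simp at hd1; linarith
      have hzy' : z' - y ≠ 0 := by
        intro h; rw [h] at hd2; simp at hd2; linarith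
      have hiden : (z - y)⁻¹ - (z' - y)⁻¹ = (z' - z) * ((z - y)⁻¹ * (z' - y)⁻¹) := by
        field_simp
        ring
      rw [hiden, norm_mul, norm_mul]
      have h1 : ‖z' - z‖ ≤ 2 * sideLen Λ m := by
        rw [norm_sub_rev]; exact diam_bound hΛ hz hz'
      have h2 : ‖(z - y)⁻¹‖ ≤ ((1-2*lam) * sideLen Λ k)⁻¹ := inv_norm_bound hdk hd1
      have h3 : ‖(z' - y)⁻¹‖ ≤ ((1-2*lam) * sideLen Λ k)⁻¹ := inv_norm_bound hdk hd2
      have := mul_le_mul h2 h3 (norm_nonneg _) (le_of_lt (inv_pos.mpr hdk))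
      exact mul_le_mul h1 this (mul_nonneg (norm_nonneg _) (norm_nonneg _))
        (by linarith [hsm m])
    have hnorm := norm_setIntegral_le_of_norm_le_const (μ := μ) (s := B k)
      (lt_of_le_of_lt (measure_mono (Set.inter_subset_left)) (measure_lt_top μ K)) hbd
    refine le_trans hnorm ?_
    apply mul_le_mul_of_nonneg_left _
      (mul_nonneg (by linarith [hsm m]) (mul_nonneg (inv_nonneg.mpr hdk.le)
        (inv_nonneg.mpr hdk.le)))
    -- μ (B k) ≤ 4⁻ᵏ
    have hμB : μ (B k) ≤ (4 : ℝ≥0∞)⁻¹ ^ k := by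
      rw [← hμQ w k]
      exact measure_mono (fun y hy => hy.2.1)
    calc (μ (B k)).toReal ≤ ((4 : ℝ≥0∞)⁻¹ ^ k).toReal :=
          ENNReal.toReal_mono (by simp) hμB
      _ = ((4:ℝ)⁻¹) ^ k := by
          rw [ENNReal.toReal_pow, ENNReal.toReal_inv]
          norm_num
  calc ‖∑ k ∈ Finset.range m, ∫ y in B k, ((z - y)⁻¹ - (z' - y)⁻¹) ∂μ‖
      ≤ ∑ k ∈ Finset.range m, ‖∫ y in B k, ((z - y)⁻¹ - (z' - y)⁻¹) ∂μ‖ :=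
        norm_sum_le _ _
    _ ≤ ∑ k ∈ Finset.range m,
        (2 * sideLen Λ m * (((1-2*lam) * sideLen Λ k)⁻¹ * ((1-2*lam) * sideLen Λ k)⁻¹))
          * ((4:ℝ)⁻¹) ^ k := Finset.sum_le_sum hterm
    _ ≤ ∑ k ∈ Finset.range m,
        2 * (1-2*lam)⁻¹ * (1-2*lam)⁻¹ * (4*lam^2)^(m-k) * linDensity Λ m := by
        refine Finset.sum_le_sum fun k hk => ?_
        have hkm := Finset.mem_range.mp hk
        have hsk := hsm k
        have hsmm := hsm m
        have hle : sideLen Λ m ≤ lam ^ (m-k) * sideLen Λ k := sideLen_le_pow hΛ hkm.le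
        have hlampos : (0:ℝ) < lam := by linarith
        -- reduce to a cross-multiplied inequality
        have e1 : 2 * sideLen Λ m * (((1-2*lam) * sideLen Λ k)⁻¹ * ((1-2*lam) * sideLen Λ k)⁻¹)
            * ((4:ℝ)⁻¹) ^ k
            = 2 * (1-2*lam)⁻¹ * (1-2*lam)⁻¹ *
              (sideLen Λ m / (sideLen Λ k * sideLen Λ k * 4^k)) := by
          rw [inv_pow, mul_inv, div_eq_mul_inv, mul_inv, mul_inv]
          ring
        have e2 : 2 * (1-2*lam)⁻¹ * (1-2*lam)⁻¹ * (4*lam^2)^(m-k) * linDensity Λ m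
            = 2 * (1-2*lam)⁻¹ * (1-2*lam)⁻¹ *
              ((lam^(m-k) * lam^(m-k) * 4^(m-k)) / (4^m * sideLen Λ m)) := by
          have hqj : (4*lam^2)^(m-k) = 4^(m-k) * (lam^(m-k) * lam^(m-k)) := by
            rw [show lam^2 = lam*lam from sq lam, mul_pow, mul_pow]
          rw [linDensity, hqj]
          ring
        rw [e1, e2]
        apply mul_le_mul_of_nonneg_left _
          (mul_nonneg (mul_nonneg (by norm_num) hδi.le) hδi.le)
        rw [div_le_div_iff₀ (mul_pos (mul_pos hsk hsk) (pow_pos h4 k))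
          (mul_pos (pow_pos h4 m) hsmm)]
        have hpow : (4:ℝ)^(m-k) * 4^k = 4^m := pow_sub_mul_pow 4 hkm.le
        have key : sideLen Λ m * sideLen Λ m ≤
            (lam^(m-k) * sideLen Λ k) * (lam^(m-k) * sideLen Λ k) := by
          nlinarith [hle, hsmm, hsk, pow_pos hlampos (m-k)]
        calc sideLen Λ m * (4^m * sideLen Λ m)
            = (sideLen Λ m * sideLen Λ m) * 4^m := by ring
          _ ≤ ((lam^(m-k) * sideLen Λ k) * (lam^(m-k) * sideLen Λ k)) * 4^m := by
              apply mul_le_mul_of_nonneg_right key (by positivity)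
          _ = lam^(m-k) * lam^(m-k) * 4^(m-k) * (sideLen Λ k * sideLen Λ k * 4^k) := by
              rw [← hpow]; ring
    _ = 2 * (1-2*lam)⁻¹ * (1-2*lam)⁻¹ * linDensity Λ m *
          ∑ k ∈ Finset.range m, (4*lam^2)^(m-k) := by
        rw [Finset.mul_sum]
        exact Finset.sum_congr rfl fun k _ => by ring
    _ ≤ 2 * (1-2*lam)⁻¹ * (1-2*lam)⁻¹ * linDensity Λ m * (1 - 4*lam^2)⁻¹ := by
        apply mul_le_mul_of_nonneg_left (geom_bound' hq0 hq1 m)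
        have hld : (0:ℝ) < linDensity Λ m :=
          one_div_pos.mpr (mul_pos (pow_pos h4 m) (hsm m))
        exact mul_nonneg (mul_nonneg (mul_nonneg (by norm_num) hδi.le) hδi.le) hld.le
    _ = 2 * (1-2*lam)⁻¹ * (1-2*lam)⁻¹ * (1 - 4*lam^2)⁻¹ * linDensity Λ m := by ring

end Analytic





lemma potential_sm (μ : Measure ℂ) [SFinite μ] (s : Set ℂ) :
    StronglyMeasurable (fun z => ∫ y in s, (z - y)⁻¹ ∂μ) := by
  have h : StronglyMeasurable (fun p : ℂ × ℂ => (p.1 - p.2)⁻¹) :=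
    ((measurable_fst.sub measurable_snd).inv).stronglyMeasurable
  exact h.integral_prod_right' (ν := μ.restrict s)

lemma potential_norm_le {μ : Measure ℂ} [IsProbabilityMeasure μ] {s : Set ℂ} {z : ℂ} {d : ℝ}
    (hd : 0 < d) (hb : ∀ y ∈ s, d ≤ ‖z - y‖) :
    ‖∫ y in s, (z - y)⁻¹ ∂μ‖ ≤ d⁻¹ := by
  have h1 : ‖∫ y in s, (z - y)⁻¹ ∂μ‖ ≤ d⁻¹ * (μ s).toReal := by
    apply norm_setIntegral_le_of_norm_le_const (lt_of_le_of_lt prob_le_one (by norm_num))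
      (fun y hy => inv_norm_bound hd (hb y hy))
  have h2 : (μ s).toReal ≤ 1 := by
    have := ENNReal.toReal_mono (by norm_num) (prob_le_one (μ := μ) (s := s))
    simpa using this
  calc ‖∫ y in s, (z - y)⁻¹ ∂μ‖ ≤ d⁻¹ * (μ s).toReal := h1
    _ ≤ d⁻¹ * 1 := mul_le_mul_of_nonneg_left h2 (inv_nonneg.mpr hd.le)
    _ = d⁻¹ := mul_one _

/-- `|S_R - S_Q - S_{Q,R}| ≤ C a_m` for squares `R ⊆ Q` with `Q ∈ 𝒟_m`, `R ∈ 𝒟_n`, `m < n`. -/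
theorem relative_martingale_bound (Λ : ℕ → ℝ) (lam : ℝ) (hlam : lam < 1 / 2)
    (hΛ : ∀ n, 1 / 4 ≤ Λ n ∧ Λ n ≤ lam)
    (μ : Measure ℂ) [IsProbabilityMeasure μ]
    (hμK : μ (cantorK Λ) = 1)
    (hμQ : ∀ (w : ℕ → Bool × Bool) (n : ℕ), μ (cSquare Λ w n) = (4 : ℝ≥0∞)⁻¹ ^ n) :
    ∃ C : ℝ, 0 < C ∧ ∀ (m n : ℕ), m < n → ∀ Q ∈ genSq Λ m, ∀ R ∈ genSq Λ n, R ⊆ Q →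
      ‖SQ Λ μ R - SQ Λ μ Q - Srel μ Q R‖ ≤ C * linDensity Λ m := by
  have hlam4 : (1:ℝ)/4 ≤ lam := le_trans (hΛ 0).1 (hΛ 0).2
  have hδ : (0:ℝ) < 1 - 2*lam := by linarith
  have hδi : (0:ℝ) < (1 - 2*lam)⁻¹ := inv_pos.mpr hδ
  have hq1 : (0:ℝ) < (1 - 4*lam^2)⁻¹ := inv_pos.mpr (by nlinarith)
  have hsm := sideLen_pos hΛ
  have hKm : MeasurableSet (cantorK Λ) := measurableSet_cantorK Λ
  refine ⟨2 * (1-2*lam)⁻¹ * (1-2*lam)⁻¹ * (1 - 4*lam^2)⁻¹,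
    by positivity, ?_⟩
  intro m n hmn Q hQ R hR hRQ
  obtain ⟨w, rfl⟩ := hQ
  obtain ⟨w', rfl⟩ := hR
  set QS := cSquare Λ w m with hQSdef
  set RS := cSquare Λ w' n with hRSdef
  set K := cantorK Λ with hKdef
  have hQmeas : MeasurableSet QS := measurableSet_cSquare Λ w m
  have hRmeas : MeasurableSet RS := measurableSet_cSquare Λ w' n
  -- measure values
  have haR : (0:ℝ) < (μ RS).toReal := by
    rw [hμQ w' n]
    rw [ENNReal.toReal_pow, ENNReal.toReal_inv]
    norm_num
  have haQ : (0:ℝ) < (μ QS).toReal := by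
    rw [hμQ w m]
    rw [ENNReal.toReal_pow, ENNReal.toReal_inv]
    norm_num
  -- complement of K is null
  have hKc : μ Kᶜ = 0 := by
    have := measure_compl hKm (measure_ne_top μ _)
    rw [hμK, measure_univ] at this
    simpa using this
  -- the potential of K \ QS
  set g : ℂ → ℂ := fun z => ∫ y in K \ QS, (z - y)⁻¹ ∂μ with hgdef
  have hg_sm : StronglyMeasurable g := potential_sm μ _
  -- distances
  have hsep_R : ∀ z ∈ RS, ∀ y ∈ K \ RS, (1-2*lam) * sideLen Λ n ≤ ‖z - y‖ :=
    fun z hz y hy => sep_estimate' hΛ hlam hz hy.1 hy.2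
  have hsep_Q : ∀ z ∈ QS, ∀ y ∈ K \ QS, (1-2*lam) * sideLen Λ m ≤ ‖z - y‖ :=
    fun z hz y hy => sep_estimate' hΛ hlam hz hy.1 hy.2
  have hdn : (0:ℝ) < (1-2*lam) * sideLen Λ n := mul_pos hδ (hsm n)
  have hdm : (0:ℝ) < (1-2*lam) * sideLen Λ m := mul_pos hδ (hsm m)
  -- integrability of inner integrands for z ∈ RS
  have hIone : ∀ z ∈ RS, IntegrableOn (fun y => (z - y)⁻¹) (K \ RS) μ := fun z hz =>
    integrableOn_of_bound (C := ((1-2*lam) * sideLen Λ n)⁻¹) (hKm.diff hRmeas)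
      (measurable_const.sub measurable_id).inv
      (fun y hy => inv_norm_bound hdn (hsep_R z hz y hy))
  have hsub1 : K \ QS ⊆ K \ RS := Set.diff_subset_diff_right hRQ
  have hsub2 : K ∩ (QS \ RS) ⊆ K \ RS := fun y hy => ⟨hy.1, hy.2.2⟩
  -- the decomposition of the inner integral
  have hsplit : ∀ z ∈ RS,
      (∫ y in K \ RS, (z - y)⁻¹ ∂μ) - (∫ y in K ∩ (QS \ RS), (z - y)⁻¹ ∂μ) = g z := by
    intro z hz
    have hset : K \ RS = (K \ QS) ∪ (K ∩ (QS \ RS)) := by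
      ext y
      have h := fun (hy : y ∈ RS) => hRQ hy
      simp only [Set.mem_diff, Set.mem_union, Set.mem_inter_iff]
      tauto
    have hdisj : Disjoint (K \ QS) (K ∩ (QS \ RS)) := by
      refine Set.disjoint_left.mpr ?_
      rintro y ⟨_, hyQ⟩ ⟨_, hyQ', _⟩
      exact hyQ hyQ'
    have := setIntegral_union (μ := μ) (f := fun y => (z - y)⁻¹) hdisj
      (hKm.inter (hQmeas.diff hRmeas))
      ((hIone z hz).mono_set hsub1) ((hIone z hz).mono_set hsub2)
    rw [← hset] at this
    rw [this]
    ring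
  -- rewrite Srel using the a.e. identification with K
  have hrestr : μ.restrict (QS \ RS) = μ.restrict (K ∩ (QS \ RS)) := by
    apply Measure.restrict_congr_set
    rw [MeasureTheory.ae_eq_set]
    constructor
    · exact measure_mono_null (fun y hy => by
        simp only [Set.mem_diff, Set.mem_inter_iff, Set.mem_compl_iff] at *
        tauto) hKc
    · exact measure_mono_null (t := (∅ : Set ℂ)) (fun y hy => absurd hy.1.2 hy.2) measure_empty
  -- integrability of the three potentials on RS resp. QS
  have hF1int : IntegrableOn (fun z => ∫ y in K \ RS, (z - y)⁻¹ ∂μ) RS μ := by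
    refine Integrable.mono' (integrable_const (((1-2*lam) * sideLen Λ n)⁻¹))
      (potential_sm μ _).aestronglyMeasurable ?_
    refine (ae_restrict_iff' hRmeas).mpr (ae_of_all _ fun z hz => ?_)
    exact potential_norm_le hdn (hsep_R z hz)
  have hF2int : IntegrableOn (fun z => ∫ y in K ∩ (QS \ RS), (z - y)⁻¹ ∂μ) RS μ := by
    refine Integrable.mono' (integrable_const (((1-2*lam) * sideLen Λ n)⁻¹))
      (potential_sm μ _).aestronglyMeasurable ?_
    refine (ae_restrict_iff' hRmeas).mpr (ae_of_all _ fun z hz => ?_)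
    exact potential_norm_le hdn (fun y hy => hsep_R z hz y (hsub2 hy))
  have hgQint : IntegrableOn g QS μ := by
    refine Integrable.mono' (integrable_const (((1-2*lam) * sideLen Λ m)⁻¹))
      hg_sm.aestronglyMeasurable ?_
    refine (ae_restrict_iff' hQmeas).mpr (ae_of_all _ fun z hz => ?_)
    exact potential_norm_le hdm (hsep_Q z hz)
  have hgRint : IntegrableOn g RS μ := hgQint.mono_set hRQ
  -- Step: SQ R - Srel = average of g over RS
  have hstep : SQ Λ μ RS - Srel μ QS RS = ⨍ z in RS, g z ∂μ := by
    unfold SQ Srel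
    rw [hrestr]
    rw [setAverage_eq, setAverage_eq, setAverage_eq]
    rw [← smul_sub, ← integral_sub hF1int hF2int]
    congr 1
    exact setIntegral_congr_fun hRmeas fun z hz => hsplit z hz
  have hSQQ : SQ Λ μ QS = ⨍ z in QS, g z ∂μ := rfl
  -- main estimate
  set C₀ := 2 * (1-2*lam)⁻¹ * (1-2*lam)⁻¹ * (1 - 4*lam^2)⁻¹ with hC₀
  have hC₀pos : (0:ℝ) < C₀ := by positivity
  have hld : (0:ℝ) < linDensity Λ m :=
    one_div_pos.mpr (mul_pos (pow_pos (by norm_num) m) (hsm m))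
  set c0 : ℂ := ⨍ z in QS, g z ∂μ with hc0
  have hcore : ∀ z ∈ QS, ∀ z' ∈ QS, ‖g z - g z'‖ ≤ C₀ * linDensity Λ m := by
    intro z hz z' hz'
    exact core_osc hΛ hlam hμQ hz hz'
  have hzb : ∀ z ∈ RS, ‖g z - c0‖ ≤ C₀ * linDensity Λ m := by
    intro z hz
    have hzQ : z ∈ QS := hRQ hz
    have e : g z - c0 = (μ QS).toReal⁻¹ • ∫ z' in QS, (g z - g z') ∂μ := by
      rw [integral_sub (integrable_const _) hgQint, setIntegral_const, measureReal_def, smul_sub,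
        inv_smul_smul₀ haQ.ne', hc0, setAverage_eq, measureReal_def]
    rw [e, norm_smul]
    have hnorm : ‖∫ z' in QS, (g z - g z') ∂μ‖ ≤ (C₀ * linDensity Λ m) * (μ QS).toReal :=
      norm_setIntegral_le_of_norm_le_const
        (lt_of_le_of_lt prob_le_one (by norm_num))
        (fun z' hz' => hcore z hzQ z' hz')
    calc ‖(μ QS).toReal⁻¹‖ * ‖∫ z' in QS, (g z - g z') ∂μ‖
        ≤ (μ QS).toReal⁻¹ * ((C₀ * linDensity Λ m) * (μ QS).toReal) := by
          rw [Real.norm_eq_abs, abs_of_nonneg (inv_nonneg.mpr haQ.le)]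
          exact mul_le_mul_of_nonneg_left hnorm (inv_nonneg.mpr haQ.le)
      _ = C₀ * linDensity Λ m := by
          field_simp
  -- conclude
  have hfinal : SQ Λ μ RS - SQ Λ μ QS - Srel μ QS RS = ⨍ z in RS, g z ∂μ - c0 := by
    rw [← hstep, hSQQ]
    ring
  rw [hfinal]
  have e2 : (⨍ z in RS, g z ∂μ) - c0 = (μ RS).toReal⁻¹ • ∫ z in RS, (g z - c0) ∂μ := by
    rw [integral_sub hgRint (integrable_const _), setIntegral_const, measureReal_def, smul_sub,
      inv_smul_smul₀ haR.ne', setAverage_eq, measureReal_def]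
  rw [e2, norm_smul]
  have hnorm2 : ‖∫ z in RS, (g z - c0) ∂μ‖ ≤ (C₀ * linDensity Λ m) * (μ RS).toReal :=
    norm_setIntegral_le_of_norm_le_const
      (lt_of_le_of_lt prob_le_one (by norm_num))
      hzb
  calc ‖(μ RS).toReal⁻¹‖ * ‖∫ z in RS, (g z - c0) ∂μ‖
      ≤ (μ RS).toReal⁻¹ * ((C₀ * linDensity Λ m) * (μ RS).toReal) := by
        rw [Real.norm_eq_abs, abs_of_nonneg (inv_nonneg.mpr haR.le)]
        exact mul_le_mul_of_nonneg_left hnorm2 (inv_nonneg.mpr haR.le)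
    _ = C₀ * linDensity Λ m := by field_simp
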